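/- arXiv:1207.4531 — 8 statements merged into one kernel-verified Lean document; each statement's English description precedes it below -/
import Mathlib

section
/- Let D be a set and T : D → D a mapping with no fixed point. Then D can be partitioned into three disjoint subsets A₀, A₁, A₂ such that Aᵢ ∩ T(Aᵢ) = ∅ for i = 0, 1, 2. -/
namespace KatetovAux

variable {D : Type*} (T : D → D)

/-- A set of (point, color) pairs is a valid partial coloring if it is functional and
closed under `T` with adjacent colors distinct. -/
def kvalid (S : Set (D × Fin 3)) : Prop :=
  (∀ x a b, (x, a) ∈ S → (x, b) ∈ S → a = b) ∧
  ∀ x a, (x, a) ∈ S → ∃ b, b ≠ a ∧ (T x, b) ∈ S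

lemma kvalid_union {M : Set (D × Fin 3)} (hM : kvalid T M)
    (f : ℕ → D) (hf : ∀ n, f (n + 1) = T (f n)) (c : ℕ → Fin 3) (I : Set ℕ)
    (hdom : ∀ n ∈ I, ∀ a, (f n, a) ∉ M)
    (hfun : ∀ m ∈ I, ∀ n ∈ I, f m = f n → c m = c n)
    (hnext : ∀ n ∈ I, (n + 1 ∈ I ∧ c (n + 1) ≠ c n) ∨ ∃ b, b ≠ c n ∧ (f (n + 1), b) ∈ M) :
    kvalid T (M ∪ {p | ∃ n ∈ I, p = (f n, c n)}) := by
  constructor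
  · rintro x a b (ha | ⟨m, hm, hma⟩) (hb | ⟨n, hn, hnb⟩)
    · exact hM.1 x a b ha hb
    · simp only [Prod.mk.injEq] at hnb
      obtain ⟨rfl, rfl⟩ := hnb
      exact absurd ha (hdom n hn a)
    · simp only [Prod.mk.injEq] at hma
      obtain ⟨rfl, rfl⟩ := hma
      exact absurd hb (hdom m hm b)
    · simp only [Prod.mk.injEq] at hma hnb
      obtain ⟨rfl, rfl⟩ := hma
      obtain ⟨hx', rfl⟩ := hnb
      exact hfun m hm n hn hx'
  · rintro x a (ha | ⟨n, hn, hna⟩)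
    · obtain ⟨b, hb, hbM⟩ := hM.2 x a ha
      exact ⟨b, hb, Or.inl hbM⟩
    · simp only [Prod.mk.injEq] at hna
      obtain ⟨rfl, rfl⟩ := hna
      rcases hnext n hn with ⟨hI, hne⟩ | ⟨b, hb, hbM⟩
      · exact ⟨c (n + 1), hne, Or.inr ⟨n + 1, hI, by rw [hf n]⟩⟩
      · exact ⟨b, hb, Or.inl (by rw [← hf n]; exact hbM)⟩

lemma period_ge {f : ℕ → D} (hf : ∀ n, f (n + 1) = T (f n)) {i p : ℕ}
    (hp : f (i + p) = f i) : ∀ n, i ≤ n → f (n + p) = f n := by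
  intro n hn
  induction n, hn using Nat.le_induction with
  | base => exact hp
  | succ n hn ih =>
    have h1 : n + 1 + p = (n + p) + 1 := by omega
    rw [h1, hf, ih, hf]

lemma period_mul {f : ℕ → D} (hf : ∀ n, f (n + 1) = T (f n)) {i p : ℕ}
    (hp : f (i + p) = f i) : ∀ k n, i ≤ n → f (n + k * p) = f n := by
  intro k
  induction k with
  | zero => simp
  | succ k ih =>
    intro n hn
    have h1 : n + (k + 1) * p = (n + k * p) + p := by ring
    rw [h1, period_ge T hf hp _ (by omega), ih n hn]

lemma period_reduce {f : ℕ → D} (hf : ∀ n, f (n + 1) = T (f n)) {i p : ℕ} (hppos : 0 < p)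
    (hp : f (i + p) = f i) : ∀ n, i ≤ n → f n = f (i + (n - i) % p) := by
  intro n hn
  have h := period_mul T hf hp ((n - i) / p) (i + (n - i) % p) (by omega)
  have hdm : p * ((n - i) / p) + (n - i) % p = n - i := Nat.div_add_mod _ _
  have h2 : i + (n - i) % p + (n - i) / p * p = i + (p * ((n - i) / p) + (n - i) % p) := by ring
  rw [h2, hdm] at h
  rw [show i + (n - i) = n by omega] at h
  exact h

end KatetovAux

/-- Katetov: if `T : D → D` has no fixed point, `D` partitions into three sets
each disjoint from its image under `T`. -/
theorem katetov_three_sets {D : Type*} (T : D → D) (hT : ∀ x, T x ≠ x) :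
    ∃ A : Fin 3 → Set D,
      (⋃ i, A i) = Set.univ ∧
      (Pairwise fun i j => Disjoint (A i) (A j)) ∧
      ∀ i, A i ∩ (T '' A i) = ∅ := by
  classical
  obtain ⟨M, hM⟩ := zorn_subset {S : Set (D × Fin 3) | KatetovAux.kvalid T S} (by
    intro ch hsub hchain
    rcases ch.eq_empty_or_nonempty with rfl | hne
    · refine ⟨∅, ⟨by simp, by simp⟩, by simp⟩
    · refine ⟨⋃₀ ch, ⟨?_, ?_⟩, fun s hs => Set.subset_sUnion_of_mem hs⟩
      · rintro x a b ⟨s, hs, has⟩ ⟨s', hs', hbs⟩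
        rcases hchain.total hs hs' with h | h
        · exact (hsub hs').1 x a b (h has) hbs
        · exact (hsub hs).1 x a b has (h hbs)
      · rintro x a ⟨s, hs, has⟩
        obtain ⟨b, hb, hbs⟩ := (hsub hs).2 x a has
        exact ⟨b, hb, s, hs, hbs⟩)
  obtain ⟨hMfun, hMcl⟩ : KatetovAux.kvalid T M := hM.1
  -- M colors every point
  have htot : ∀ x : D, ∃ a, (x, a) ∈ M := by
    by_contra h
    push_neg at h
    obtain ⟨x₀, h₀⟩ := h
    set f : ℕ → D := fun n => T^[n] x₀ with hfdef
    have hf : ∀ n, f (n + 1) = T (f n) := fun n => Function.iterate_succ_apply' T n x₀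
    have hf0 : f 0 = x₀ := rfl
    have contra : ∀ (c : ℕ → Fin 3) (I : Set ℕ), 0 ∈ I →
        (∀ n ∈ I, ∀ a, (f n, a) ∉ M) →
        (∀ m ∈ I, ∀ n ∈ I, f m = f n → c m = c n) →
        (∀ n ∈ I, (n + 1 ∈ I ∧ c (n + 1) ≠ c n) ∨ ∃ b, b ≠ c n ∧ (f (n + 1), b) ∈ M) →
        False := by
      intro c I h0I hdom hfun hnext
      have hval := KatetovAux.kvalid_union T ⟨hMfun, hMcl⟩ f hf c I hdom hfun hnext
      have hsub2 : M ∪ {p | ∃ n ∈ I, p = (f n, c n)} ⊆ M :=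
        hM.2 hval Set.subset_union_left
      have : (f 0, c 0) ∈ M := hsub2 (Or.inr ⟨0, h0I, rfl⟩)
      exact h₀ (c 0) (hf0 ▸ this)
    by_cases hhit : ∃ n, ∃ a, (f n, a) ∈ M
    · -- Case 1: the orbit eventually reaches the colored region
      set n₀ := Nat.find hhit with hn₀def
      obtain ⟨a₀, ha₀⟩ := Nat.find_spec hhit
      have hmin : ∀ k, k < n₀ → ∀ a, (f k, a) ∉ M := fun k hk a ha =>
        Nat.find_min hhit hk ⟨a, ha⟩
      have hn₀pos : 0 < n₀ := by
        rcases Nat.eq_zero_or_pos n₀ with h | h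
        · exact absurd (h ▸ ha₀) (hf0 ▸ h₀ a₀)
        · exact h
      have hinj1 : ∀ i j, i < j → j < n₀ → f i ≠ f j := by
        intro i j hij hj heq
        have hper : f (i + (j - i)) = f i := by
          rw [show i + (j - i) = j by omega]; exact heq.symm
        have hred := KatetovAux.period_reduce T hf (show 0 < j - i by omega) hper n₀ (by omega)
        have hm : i + (n₀ - i) % (j - i) < n₀ := by
          have := Nat.mod_lt (n₀ - i) (show 0 < j - i by omega)
          omega
        exact hmin _ hm a₀ (hred ▸ ha₀)
      set other : Fin 3 → Fin 3 := fun b => if b = 0 then 1 else 0 with hotherdef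
      have hother : ∀ b, other b ≠ b := by decide
      refine contra (fun k => other^[n₀ - k] a₀) (Set.Iio n₀) (by simpa using hn₀pos)
        (fun n hn => hmin n hn) ?_ ?_
      · intro m hm n hn h
        rcases Nat.lt_trichotomy m n with hlt | rfl | hlt
        · exact absurd h (hinj1 m n hlt hn)
        · rfl
        · exact absurd h.symm (hinj1 n m hlt hm)
      · intro n hn
        simp only [Set.mem_Iio] at hn
        by_cases h1 : n + 1 < n₀
        · left
          refine ⟨h1, ?_⟩
          show other^[n₀ - (n + 1)] a₀ ≠ other^[n₀ - n] a₀
          have he : n₀ - n = (n₀ - (n + 1)) + 1 := by omega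
          rw [he, Function.iterate_succ_apply']
          exact (hother _).symm
        · have hn1 : n + 1 = n₀ := by omega
          right
          refine ⟨a₀, ?_, by rw [hn1]; exact ha₀⟩
          show a₀ ≠ other^[n₀ - n] a₀
          have he : n₀ - n = 1 := by omega
          rw [he]
          simpa using (hother a₀).symm
    · push_neg at hhit
      by_cases hinj : ∀ m n : ℕ, f m = f n → m = n
      · -- Case 2: orbit never repeats, alternate two colors
        refine contra (fun n => if n % 2 = 0 then 0 else 1) Set.univ trivial
          (fun n _ a => hhit n a) (fun m _ n _ h => by rw [hinj m n h]) ?_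
        intro n _
        left
        refine ⟨trivial, ?_⟩
        show (if (n + 1) % 2 = 0 then (0 : Fin 3) else 1) ≠ (if n % 2 = 0 then 0 else 1)
        by_cases he : n % 2 = 0
        · rw [if_pos he, if_neg (by omega)]; decide
        · rw [if_neg he, if_pos (by omega)]; decide
      · -- Case 3: orbit is eventually periodic, never meeting the colored region
        push_neg at hinj
        have hP : ∃ i, ∃ j, i < j ∧ f i = f j := by
          obtain ⟨m, n, hmn, hne⟩ := hinj
          rcases Nat.lt_trichotomy m n with h | h | h
          · exact ⟨m, n, h, hmn⟩
          · exact absurd h hne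
          · exact ⟨n, m, h, hmn.symm⟩
        obtain ⟨t, ⟨j₁, htj, hfj⟩, htmin⟩ :
            ∃ t, (∃ j, t < j ∧ f t = f j) ∧ ∀ i < t, ¬∃ j, i < j ∧ f i = f j :=
          ⟨Nat.find hP, Nat.find_spec hP, fun i hi => Nat.find_min hP hi⟩
        have hQ : ∃ q, 0 < q ∧ f (t + q) = f t :=
          ⟨j₁ - t, by omega, by rw [show t + (j₁ - t) = j₁ by omega]; exact hfj.symm⟩
        obtain ⟨p, ⟨hppos, hper0⟩, hpmin⟩ :
            ∃ p, (0 < p ∧ f (t + p) = f t) ∧ ∀ q < p, ¬(0 < q ∧ f (t + q) = f t) :=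
          ⟨Nat.find hQ, Nat.find_spec hQ, fun q hq => Nat.find_min hQ hq⟩
        have hp2 : 2 ≤ p := by
          by_contra h
          have hp1 : p = 1 := by omega
          rw [hp1, hf t] at hper0
          exact hT (f t) hper0
        have hinj2' : ∀ i j, i < j → j < t + p → f i ≠ f j := by
          intro i j hij hj heq
          by_cases hit : i < t
          · exact htmin i hit ⟨j, hij, heq⟩
          · have hti : t ≤ i := not_lt.mp hit
            have hq0 : 0 < j - i := by omega
            have hqp : j - i < p := by omega
            have hperq : ∀ n, i ≤ n → f (n + (j - i)) = f n :=
              KatetovAux.period_ge T hf (by rw [show i + (j - i) = j by omega]; exact heq.symm)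
            have hmul : ∀ k n, t ≤ n → f (n + k * p) = f n :=
              fun k n hn => KatetovAux.period_mul T hf hper0 k n hn
            have hkp : i ≤ t + i * p := by
              have : i ≤ i * p := Nat.le_mul_of_pos_right i hppos
              omega
            have h1 : f (t + i * p + (j - i)) = f (t + i * p) := hperq _ hkp
            have h2 : f (t + i * p) = f t := hmul i t le_rfl
            have h3 : f (t + i * p + (j - i)) = f (t + (j - i)) := by
              rw [show t + i * p + (j - i) = (t + (j - i)) + i * p by ring]
              exact hmul i (t + (j - i)) (by omega)
            exact hpmin (j - i) hqp ⟨hq0, by rw [← h3, h1, h2]⟩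
        have hinj2 : ∀ i j, i < t + p → j < t + p → f i = f j → i = j := by
          intro i j hi hj heq
          rcases Nat.lt_trichotomy i j with h | h | h
          · exact absurd heq (hinj2' i j h hj)
          · exact h
          · exact absurd heq.symm (hinj2' j i h hi)
        set cyc : ℕ → Fin 3 := fun r =>
          if r + 1 = p then (if p % 2 = 0 then 1 else 2)
          else if r % 2 = 0 then 0 else 1 with hcycdef
        set c : ℕ → Fin 3 := fun n =>
          if n < t then (if (t - n) % 2 = 0 then 0 else 1)
          else cyc ((n - t) % p) with hcdef
        have hcyc0 : cyc 0 = 0 := by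
          show (if 0 + 1 = p then (if p % 2 = 0 then 1 else 2)
            else if 0 % 2 = 0 then (0 : Fin 3) else 1) = 0
          split_ifs with h1 h2 <;> first | rfl | omega
        have hcycadj : ∀ r, r + 1 < p → cyc r ≠ cyc (r + 1) := by
          intro r hr
          show (if r + 1 = p then (if p % 2 = 0 then 1 else 2)
              else if r % 2 = 0 then (0 : Fin 3) else 1) ≠
            (if r + 1 + 1 = p then (if p % 2 = 0 then 1 else 2)
              else if (r + 1) % 2 = 0 then 0 else 1)
          split_ifs <;> first | decide | omega
        have hcyclast : cyc (p - 1) ≠ cyc 0 := by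
          rw [hcyc0]
          show (if p - 1 + 1 = p then (if p % 2 = 0 then 1 else 2)
            else if (p - 1) % 2 = 0 then (0 : Fin 3) else 1) ≠ 0
          split_ifs <;> first | decide | omega
        have hclt : ∀ n, n < t → c n = (if (t - n) % 2 = 0 then 0 else 1) := by
          intro n h
          show (if n < t then (if (t - n) % 2 = 0 then (0 : Fin 3) else 1)
            else cyc ((n - t) % p)) = _
          rw [if_pos h]
        have hcge : ∀ n, t ≤ n → c n = cyc ((n - t) % p) := by
          intro n h
          show (if n < t then (if (t - n) % 2 = 0 then (0 : Fin 3) else 1)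
            else cyc ((n - t) % p)) = _
          rw [if_neg (by omega)]
        have hcadj : ∀ n, c (n + 1) ≠ c n := by
          intro n
          by_cases h1 : n + 1 < t
          · rw [hclt (n + 1) h1, hclt n (by omega)]
            split_ifs <;> first | decide | omega
          · by_cases h2 : n + 1 = t
            · rw [hcge (n + 1) (by omega), hclt n (by omega),
                show (n + 1 - t) % p = 0 by rw [show n + 1 - t = 0 by omega]; exact Nat.zero_mod p, hcyc0]
              split_ifs <;> first | decide | omega
            · have hnt : t ≤ n := by omega
              rw [hcge (n + 1) (by omega), hcge n hnt]
              have hr : (n + 1 - t) % p = ((n - t) % p + 1) % p := by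
                rw [show n + 1 - t = (n - t) + 1 by omega, Nat.add_mod,
                  Nat.one_mod_eq_one.mpr (by omega)]
              rw [hr]
              have hrp : (n - t) % p < p := Nat.mod_lt _ (by omega)
              by_cases hlast : (n - t) % p + 1 = p
              · rw [hlast, Nat.mod_self, show (n - t) % p = p - 1 by omega]
                exact hcyclast.symm
              · rw [Nat.mod_eq_of_lt (by omega)]
                exact (hcycadj _ (by omega)).symm
        set ρ : ℕ → ℕ := fun n => if n < t then n else t + (n - t) % p with hρdef
        have hρval_lt : ∀ n, n < t → ρ n = n := by
          intro n h
          show (if n < t then n else t + (n - t) % p) = n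
          rw [if_pos h]
        have hρval_ge : ∀ n, t ≤ n → ρ n = t + (n - t) % p := by
          intro n h
          show (if n < t then n else t + (n - t) % p) = _
          rw [if_neg (by omega)]
        have hρlt : ∀ n, ρ n < t + p := by
          intro n
          by_cases h : n < t
          · rw [hρval_lt n h]; omega
          · rw [hρval_ge n (by omega)]
            have := Nat.mod_lt (n - t) (show 0 < p by omega)
            omega
        have hfρ : ∀ n, f (ρ n) = f n := by
          intro n
          by_cases h : n < t
          · rw [hρval_lt n h]
          · rw [hρval_ge n (by omega)]
            exact (KatetovAux.period_reduce T hf hppos hper0 n (by omega)).symm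
        have hcρ : ∀ n, c (ρ n) = c n := by
          intro n
          by_cases h : n < t
          · rw [hρval_lt n h]
          · rw [hρval_ge n (by omega), hcge n (by omega), hcge (t + (n - t) % p) (by omega),
              Nat.add_sub_cancel_left,
              Nat.mod_eq_of_lt (Nat.mod_lt _ (show 0 < p by omega))]
        refine contra c Set.univ trivial (fun n _ a => hhit n a) ?_ ?_
        · intro m _ n _ h
          have hrr : ρ m = ρ n := hinj2 (ρ m) (ρ n) (hρlt m) (hρlt n) (by rw [hfρ, hfρ, h])
          rw [← hcρ m, ← hcρ n, hrr]
        · intro n _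
          exact Or.inl ⟨trivial, hcadj n⟩
  refine ⟨fun i => {x | (x, i) ∈ M}, ?_, ?_, ?_⟩
  · ext x
    simp only [Set.mem_iUnion, Set.mem_univ, iff_true]
    exact htot x
  · intro i j hij
    rw [Set.disjoint_left]
    intro x hxi hxj
    exact hij (hMfun x i j hxi hxj)
  · intro i
    ext x
    simp only [Set.mem_inter_iff, Set.mem_image, Set.mem_empty_iff_false, iff_false, not_and]
    rintro hxi ⟨y, hyi, rfl⟩
    obtain ⟨b, hb, hbM⟩ := hMcl y i hyi
    exact hb (hMfun (T y) b i hbM hxi)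
end

section
/- Every L-embedded subset of a Banach space is weakly closed. -/
open NormedSpace Set

/-- The weak* closure in the bidual of a set of functionals on the dual. -/
noncomputable def weakStarClosure {E : Type*} [NormedAddCommGroup E] [NormedSpace ℝ E]
    (S : Set (StrongDual ℝ (StrongDual ℝ E))) : Set (StrongDual ℝ (StrongDual ℝ E)) :=
  {u | StrongDual.toWeakDual u ∈ closure (StrongDual.toWeakDual '' S)}

/-- A nonempty subset `C` of a Banach space `E` is L-embedded if there is a subspace
`E_s` of the bidual with `E + E_s = E ⊕₁ E_s` and the weak* closure of `C` contained in
`C ⊕₁ E_s` (with additive norms). -/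
def IsLEmbeddedSet {E : Type*} [NormedAddCommGroup E] [NormedSpace ℝ E] (C : Set E) : Prop :=
  ∃ Es : Submodule ℝ (StrongDual ℝ (StrongDual ℝ E)),
    (∀ (x : E), ∀ ξ ∈ Es, ‖inclusionInDoubleDual ℝ E x + ξ‖ = ‖x‖ + ‖ξ‖) ∧
    ∀ u ∈ weakStarClosure (inclusionInDoubleDual ℝ E '' C),
      ∃ c ∈ C, ∃ ξ ∈ Es, u = inclusionInDoubleDual ℝ E c + ξ ∧ ‖u‖ = ‖c‖ + ‖ξ‖

/-- Every L-embedded subset of a Banach space is weakly closed. -/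
theorem isLEmbeddedSet_weaklyClosed {E : Type*} [NormedAddCommGroup E] [NormedSpace ℝ E]
    [CompleteSpace E] (C : Set E) (hC : C.Nonempty) (hL : IsLEmbeddedSet C) :
    IsClosed (toWeakSpace ℝ E '' C) := by
  obtain ⟨Es, hEs, hdec⟩ := hL
  have hsub : closure (toWeakSpace ℝ E '' C) ⊆ toWeakSpace ℝ E '' C := by
    intro y hy
    set x : E := (toWeakSpace ℝ E).symm y with hxdef
    have hyx : y = toWeakSpace ℝ E x := by simp [hxdef]
    set g : WeakSpace ℝ E → WeakDual ℝ (StrongDual ℝ E) := fun z =>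
      StrongDual.toWeakDual (inclusionInDoubleDual ℝ E ((toWeakSpace ℝ E).symm z)) with hg
    have hcont : Continuous g := by
      apply WeakBilin.continuous_of_continuous_eval
      intro f
      exact WeakBilin.eval_continuous ((topDualPairing ℝ E).flip) f
    have h1 : g y ∈ closure (g '' (toWeakSpace ℝ E '' C)) :=
      image_closure_subset_closure_image hcont ⟨y, hy, rfl⟩
    have himg : g '' (toWeakSpace ℝ E '' C) =
        StrongDual.toWeakDual '' (inclusionInDoubleDual ℝ E '' C) := by
      rw [image_image, image_image]
      rfl
    have hx_ws : inclusionInDoubleDual ℝ E x ∈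
        weakStarClosure (inclusionInDoubleDual ℝ E '' C) := by
      rw [himg] at h1
      exact h1
    obtain ⟨c, hcC, ξ, hξEs, hu, -⟩ := hdec _ hx_ws
    have hzero : inclusionInDoubleDual ℝ E (c - x) + ξ = 0 := by
      rw [map_sub]
      rw [sub_add_eq_add_sub, ← hu]
      abel
    have := hEs (c - x) ξ hξEs
    rw [hzero, norm_zero (E := StrongDual ℝ (StrongDual ℝ E))] at this
    have hcx : ‖c - x‖ = 0 := by
      have h1 : (0:ℝ) ≤ ‖c - x‖ := norm_nonneg _
      have h2 : (0:ℝ) ≤ ‖ξ‖ := norm_nonneg (E := StrongDual ℝ (StrongDual ℝ E)) _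
      linarith
    have hxc : x = c := by
      have := norm_eq_zero.mp hcx
      rw [sub_eq_zero] at this
      exact this.symm
    exact ⟨c, hcC, by rw [hyx, hxc]⟩
  exact closure_subset_iff_isClosed.mp hsub
end

section
/- A Banach space E is L-embedded if and only if its closed unit ball is an L-embedded subset of E. -/
open NormedSpace Set

/-- A Banach space `E` is L-embedded if `E** = E ⊕₁ E_s` for some subspace `E_s`. -/
def IsLEmbeddedSpace (E : Type*) [NormedAddCommGroup E] [NormedSpace ℝ E] : Prop :=
  ∃ Es : Submodule ℝ (StrongDual ℝ (StrongDual ℝ E)),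
    (∀ (x : E), ∀ ξ ∈ Es, ‖inclusionInDoubleDual ℝ E x + ξ‖ = ‖x‖ + ‖ξ‖) ∧
    ∀ u : StrongDual ℝ (StrongDual ℝ E), ∃ x : E, ∃ ξ ∈ Es, u = inclusionInDoubleDual ℝ E x + ξ

/-- Every continuous linear functional on the weak-* dual is an evaluation. -/
lemma weakDual_dual_eval {F : Type*} [NormedAddCommGroup F] [NormedSpace ℝ F]
    (g : WeakDual ℝ F →L[ℝ] ℝ) : ∃ φ : F, ∀ u : WeakDual ℝ F, g u = u φ := by
  have hsem : WithSeminorms (WeakDual.seminormFamily ℝ F) :=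
    WeakDual.withSeminorms ℝ F
  set q : Seminorm ℝ (WeakDual ℝ F) := (g : WeakDual ℝ F →ₗ[ℝ] ℝ).toSeminorm with hqdef
  have hqc : Continuous q := by
    have : ⇑q = fun x => ‖g x‖ := rfl
    rw [this]; exact g.continuous.norm
  obtain ⟨s, C, hC, hle⟩ := Seminorm.bound_of_continuous hsem q hqc
  set L : s → (WeakDual ℝ F →ₗ[ℝ] ℝ) := fun i => (topDualPairing ℝ F).flip (i : F) with hL
  have hker : ⨅ i, LinearMap.ker (L i) ≤ LinearMap.ker (g : WeakDual ℝ F →ₗ[ℝ] ℝ) := by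
    intro x hx
    simp only [Submodule.mem_iInf, LinearMap.mem_ker] at hx ⊢
    have hsup : (s.sup (WeakDual.seminormFamily ℝ F)) x ≤ 0 := by
      refine Seminorm.finset_sup_apply_le le_rfl fun i hi => ?_
      rw [WeakDual.seminormFamily_apply,
        show x i = 0 from hx ⟨i, hi⟩]
      simp
    have := hle x
    have h2 : ‖g x‖ ≤ 0 := by
      calc ‖g x‖ = q x := rfl
        _ ≤ (C • s.sup (WeakDual.seminormFamily ℝ F)) x := this
        _ = (C : ℝ) * (s.sup (WeakDual.seminormFamily ℝ F)) x := rfl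
        _ ≤ 0 := by
            apply mul_nonpos_of_nonneg_of_nonpos (by positivity) hsup
    simpa using norm_le_zero_iff.mp h2
  have hmem := mem_span_of_iInf_ker_le_ker hker
  have key : ∀ f ∈ Submodule.span ℝ (Set.range L),
      ∃ φ : F, ∀ u : WeakDual ℝ F, f u = u φ := by
    intro f hf
    refine Submodule.span_induction ?_ ?_ ?_ ?_ hf
    · rintro f ⟨i, rfl⟩
      exact ⟨(i : F), fun u => rfl⟩
    · exact ⟨0, fun u => by simp [map_zero u]⟩
    · rintro f₁ f₂ - - ⟨φ₁, h₁⟩ ⟨φ₂, h₂⟩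
      exact ⟨φ₁ + φ₂, fun u => by simp [h₁ u, h₂ u, map_add u]⟩
    · rintro c f - ⟨φ, h⟩
      exact ⟨c • φ, fun u => by simp [h u, map_smul u]⟩
  obtain ⟨φ, hφ⟩ := key _ hmem
  exact ⟨φ, hφ⟩

/-- Goldstine's theorem: the closed unit ball of `E**` is contained in the weak-* closure
of the image of the closed unit ball of `E`. -/
lemma goldstine {E : Type*} [NormedAddCommGroup E] [NormedSpace ℝ E]
    (u : StrongDual ℝ (StrongDual ℝ E)) (hu : ‖u‖ ≤ 1) :
    StrongDual.toWeakDual u ∈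
      closure (StrongDual.toWeakDual '' (inclusionInDoubleDual ℝ E '' Metric.closedBall (0 : E) 1)) := by
  by_contra h
  haveI : LocallyConvexSpace ℝ (WeakDual ℝ (StrongDual ℝ E)) :=
    (WeakDual.withSeminorms ℝ (StrongDual ℝ E)).toLocallyConvexSpace
  set T : E →ₗ[ℝ] WeakDual ℝ (StrongDual ℝ E) :=
    (StrongDual.toWeakDual.toLinearMap.comp (inclusionInDoubleDual ℝ E).toLinearMap) with hT
  have himg : StrongDual.toWeakDual '' (inclusionInDoubleDual ℝ E '' Metric.closedBall (0 : E) 1)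
      = T '' Metric.closedBall (0 : E) 1 := by
    rw [Set.image_image]; rfl
  have hconv : Convex ℝ (closure (StrongDual.toWeakDual ''
      (inclusionInDoubleDual ℝ E '' Metric.closedBall (0 : E) 1))) := by
    rw [himg]
    exact ((convex_closedBall (0 : E) 1).linear_image T).closure
  obtain ⟨f, r, hfs, hru⟩ := geometric_hahn_banach_closed_point hconv isClosed_closure h
  obtain ⟨φ, hφ⟩ := weakDual_dual_eval f
  have hball : ∀ x ∈ Metric.closedBall (0 : E) 1, φ x < r := by
    intro x hx
    have hmem : StrongDual.toWeakDual (inclusionInDoubleDual ℝ E x) ∈ closure (StrongDual.toWeakDual ''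
        (inclusionInDoubleDual ℝ E '' Metric.closedBall (0 : E) 1)) :=
      subset_closure ⟨_, ⟨x, hx, rfl⟩, rfl⟩
    have := hfs _ hmem
    rw [hφ] at this
    simpa [NormedSpace.dual_def] using this
  have h0 : (0 : ℝ) < r := by simpa using hball 0 (by simp)
  have hφnorm : ‖φ‖ ≤ r := by
    refine ContinuousLinearMap.opNorm_le_bound _ h0.le fun x => ?_
    rcases eq_or_ne x 0 with rfl | hx
    · simp [h0.le]
    · have hxn : (0 : ℝ) < ‖x‖ := norm_pos_iff.mpr hx
      set y := ‖x‖⁻¹ • x with hy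
      have hyb : y ∈ Metric.closedBall (0 : E) 1 := by
        rw [Metric.mem_closedBall, dist_zero_right, hy, norm_smul, norm_inv, norm_norm,
          inv_mul_cancel₀ hxn.ne']
      have h1 : φ y < r := hball y hyb
      have h2' : φ (-y) < r := hball (-y) (by simpa using hyb)
      have h2 : -φ y < r := by simpa using h2'
      have habs : |φ y| ≤ r := abs_le.mpr ⟨by linarith, h1.le⟩
      have hxy : x = ‖x‖ • y := by
        rw [hy, smul_smul, mul_inv_cancel₀ hxn.ne', one_smul]
      calc ‖φ x‖ = |φ (‖x‖ • y)| := by rw [← hxy]; rfl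
        _ = ‖x‖ * |φ y| := by rw [map_smul, smul_eq_mul, abs_mul, abs_of_nonneg hxn.le]
        _ ≤ ‖x‖ * r := mul_le_mul_of_nonneg_left habs hxn.le
        _ = r * ‖x‖ := mul_comm _ _
  have hfin : f (StrongDual.toWeakDual u) ≤ r := by
    rw [hφ]
    calc (StrongDual.toWeakDual u) φ ≤ ‖u φ‖ := le_abs_self _
      _ ≤ ‖u‖ * ‖φ‖ := u.le_opNorm φ
      _ ≤ 1 * r := mul_le_mul hu hφnorm (norm_nonneg _) zero_le_one
      _ = r := one_mul r
  linarith

/-- The norm is weak-* lower semicontinuous: elements of the weak-* closure of the image of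
the unit ball have norm at most one. -/
lemma norm_le_one_of_mem_weakStarClosure {E : Type*} [NormedAddCommGroup E] [NormedSpace ℝ E]
    (u : StrongDual ℝ (StrongDual ℝ E))
    (hu : u ∈ weakStarClosure (inclusionInDoubleDual ℝ E '' Metric.closedBall (0 : E) 1)) :
    ‖u‖ ≤ 1 := by
  refine ContinuousLinearMap.opNorm_le_bound _ zero_le_one fun φ => ?_
  have hcl : closure (StrongDual.toWeakDual ''
      (inclusionInDoubleDual ℝ E '' Metric.closedBall (0 : E) 1))
      ⊆ {w : WeakDual ℝ (StrongDual ℝ E) | ‖w φ‖ ≤ ‖φ‖} := by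
    apply closure_minimal
    · rintro _ ⟨_, ⟨x, hx, rfl⟩, rfl⟩
      have hx1 : ‖x‖ ≤ 1 := by
        simpa [Metric.mem_closedBall, dist_zero_right] using hx
      calc ‖(inclusionInDoubleDual ℝ E x) φ‖ = ‖φ x‖ := rfl
        _ ≤ ‖φ‖ * ‖x‖ := φ.le_opNorm x
        _ ≤ ‖φ‖ * 1 := mul_le_mul_of_nonneg_left hx1 (norm_nonneg _)
        _ = ‖φ‖ := mul_one _
    · exact isClosed_Iic.preimage ((WeakBilin.eval_continuous _ φ).norm)
  have := hcl hu
  simpa [one_mul] using (show ‖u φ‖ ≤ ‖φ‖ from this)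

/-- A Banach space is L-embedded iff its closed unit ball is an L-embedded subset. -/
theorem isLEmbeddedSpace_iff_unitBall {E : Type*} [NormedAddCommGroup E] [NormedSpace ℝ E]
    [CompleteSpace E] :
    IsLEmbeddedSpace E ↔ IsLEmbeddedSet (Metric.closedBall (0 : E) 1) := by
  constructor
  · rintro ⟨Es, hEs, hdec⟩
    refine ⟨Es, hEs, fun u hu => ?_⟩
    obtain ⟨x, ξ, hξ, hux⟩ := hdec u
    have hnorm : ‖u‖ = ‖x‖ + ‖ξ‖ := by rw [hux]; exact hEs x ξ hξ
    have hu1 : ‖u‖ ≤ 1 := norm_le_one_of_mem_weakStarClosure u hu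
    have hx1 : x ∈ Metric.closedBall (0 : E) 1 := by
      rw [Metric.mem_closedBall, dist_zero_right]
      nlinarith [norm_nonneg ξ]
    exact ⟨x, hx1, ξ, hξ, hux, hnorm⟩
  · rintro ⟨Es, hEs, hdec⟩
    refine ⟨Es, hEs, fun u => ?_⟩
    rcases eq_or_ne u 0 with rfl | hu0
    · exact ⟨0, 0, Es.zero_mem, by simp⟩
    · have hun : (0 : ℝ) < ‖u‖ := by
        rcases (norm_nonneg u).lt_or_eq with h | h
        · exact h
        · have h' : ‖u‖ = 0 := h.symm
          exact absurd ((ContinuousLinearMap.opNorm_zero_iff u).mp h') hu0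
      set v := ‖u‖⁻¹ • u with hv
      have hvn : ‖v‖ ≤ 1 := by
        rw [hv]; refine (ContinuousLinearMap.opNorm_smul_le (‖u‖⁻¹) u).trans ?_
        rw [norm_inv, Real.norm_of_nonneg (norm_nonneg u), inv_mul_cancel₀ hun.ne']
      have hvmem : v ∈ weakStarClosure
          (inclusionInDoubleDual ℝ E '' Metric.closedBall (0 : E) 1) :=
        goldstine v hvn
      obtain ⟨c, hc, ξ, hξ, hvc, -⟩ := hdec v hvmem
      refine ⟨‖u‖ • c, ‖u‖ • ξ, Es.smul_mem _ hξ, ?_⟩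
      have huv : u = ‖u‖ • v := by
        rw [hv, smul_smul, mul_inv_cancel₀ hun.ne', one_smul]
      calc u = ‖u‖ • v := huv
        _ = ‖u‖ • (inclusionInDoubleDual ℝ E c + ξ) := by rw [hvc]
        _ = inclusionInDoubleDual ℝ E (‖u‖ • c) + ‖u‖ • ξ := by rw [smul_add, map_smul]
end

section
/- Every weak* closed subset of the dual space X* of an M-embedded Banach space X is L-embedded. -/
open NormedSpace Set

/-- A Banach space `X` is M-embedded if `X*** = X* ⊕₁ X^⊥`, where
`X^⊥` is the annihilator of `X` in `X***`. -/
def IsMEmbeddedSpace (X : Type*) [NormedAddCommGroup X] [NormedSpace ℝ X] : Prop :=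
  ∀ ψ : StrongDual ℝ (StrongDual ℝ (StrongDual ℝ X)),
    ∃ f : StrongDual ℝ X, ∃ φ : StrongDual ℝ (StrongDual ℝ (StrongDual ℝ X)),
      (∀ x : X, φ (inclusionInDoubleDual ℝ X x) = 0) ∧
      ψ = inclusionInDoubleDual ℝ (StrongDual ℝ X) f + φ ∧ @Norm.norm _ (ContinuousLinearMap.hasOpNorm (σ₁₂ := RingHom.id ℝ)
          (E := StrongDual ℝ (StrongDual ℝ X)) (F := ℝ)) ψ = ‖f‖ +
        @Norm.norm _ (ContinuousLinearMap.hasOpNorm (σ₁₂ := RingHom.id ℝ)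
          (E := StrongDual ℝ (StrongDual ℝ X)) (F := ℝ)) φ

/-- Every weak* closed subset of the dual of an M-embedded Banach space is L-embedded. -/
theorem isLEmbeddedSet_of_weakStarClosed {X : Type*} [NormedAddCommGroup X] [NormedSpace ℝ X]
    [CompleteSpace X] (hM : IsMEmbeddedSpace X) (C : Set (StrongDual ℝ X)) (hC : C.Nonempty)
    (hclosed : IsClosed (StrongDual.toWeakDual '' C : Set (WeakDual ℝ X))) :
    IsLEmbeddedSet C := by
  classical
  letI : NormedAddCommGroup (StrongDual ℝ (StrongDual ℝ (StrongDual ℝ X))) :=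
    @ContinuousLinearMap.toNormedAddCommGroup ℝ ℝ (StrongDual ℝ (StrongDual ℝ X)) ℝ _ _ _ _ _ _
      (RingHom.id ℝ) _
  set ιX := inclusionInDoubleDual ℝ X
  set ιd := inclusionInDoubleDual ℝ (StrongDual ℝ X)
  -- the annihilator of X in X***
  set Es : Submodule ℝ (StrongDual ℝ (StrongDual ℝ (StrongDual ℝ X))) :=
    { carrier := {ξ | ∀ x : X, ξ (ιX x) = 0}
      add_mem' := by intro a b ha hb x; simp [ha x, hb x]
      zero_mem' := by intro x; simp
      smul_mem' := by intro c a ha x; simp [ha x] } with hEs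
  -- key norm additivity
  have key : ∀ (f : StrongDual ℝ X), ∀ ξ ∈ Es, ‖ιd f + ξ‖ = ‖f‖ + ‖ξ‖ := by
    intro f ξ hξ
    obtain ⟨g, φ, hφ, heq, hnorm⟩ := hM (ιd f + ξ)
    have hfg : f = g := by
      ext x
      have := congrArg (fun ψ => ψ (ιX x)) heq
      simp only [ContinuousLinearMap.add_apply] at this
      rw [hξ x, hφ x] at this
      simpa [ιd, ιX, inclusionInDoubleDual, inclusionInDoubleDualLi] using this
    have hξφ : ξ = φ := by
      have : ιd f + ξ = ιd f + φ := by rw [heq, hfg]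
      exact add_left_cancel this
    rw [hnorm, hfg, hξφ]
  refine ⟨Es, key, ?_⟩
  intro u hu
  -- restriction map
  set f : StrongDual ℝ X := u.comp ιX with hf
  have hfval : ∀ x : X, f x = u (ιX x) := fun x => rfl
  set ξ := u - ιd f with hξdef
  have hξmem : ξ ∈ Es := by
    intro x
    simp only [hξdef, ContinuousLinearMap.sub_apply]
    have : (ιd f) (ιX x) = f x := rfl
    show u (ιX x) - (ιd f) (ιX x) = 0
    rw [this, hfval x, sub_self]
  -- f ∈ C via the weak* closure argument
  have hfC : f ∈ C := by
    -- the weak*-continuous restriction map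
    set R : WeakDual ℝ (StrongDual ℝ (StrongDual ℝ X)) → WeakDual ℝ X :=
      fun v => StrongDual.toWeakDual ((StrongDual.toWeakDual.symm v).comp ιX) with hR
    have hRcont : Continuous R := by
      apply WeakDual.continuous_of_continuous_eval
      intro x
      have : (fun v : WeakDual ℝ (StrongDual ℝ (StrongDual ℝ X)) => (R v) x)
          = fun v => v (ιX x) := rfl
      rw [this]
      exact WeakDual.eval_continuous _
    have himg : R '' (StrongDual.toWeakDual '' (ιd '' C)) = StrongDual.toWeakDual '' C := by
      ext w
      constructor
      · rintro ⟨_, ⟨_, ⟨c, hc, rfl⟩, rfl⟩, rfl⟩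
        exact ⟨c, hc, rfl⟩
      · rintro ⟨c, hc, rfl⟩
        exact ⟨StrongDual.toWeakDual (ιd c), ⟨ιd c, ⟨c, hc, rfl⟩, rfl⟩, rfl⟩
    have hmem : R (StrongDual.toWeakDual u) ∈ closure (R '' (StrongDual.toWeakDual '' (ιd '' C))) := by
      have := hu
      simp only [weakStarClosure, Set.mem_setOf_eq] at this
      exact image_closure_subset_closure_image hRcont ⟨_, this, rfl⟩
    rw [himg, hclosed.closure_eq] at hmem
    have hRu : R (StrongDual.toWeakDual u) = StrongDual.toWeakDual f := rfl
    rw [hRu] at hmem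
    obtain ⟨c, hc, hcf⟩ := hmem
    have : c = f := StrongDual.toWeakDual.injective hcf
    rwa [← this]
  refine ⟨f, hfC, ξ, hξmem, ?_, ?_⟩
  · exact (add_sub_cancel (ιd f) u).symm
  · rw [show u = ιd f + ξ by simp [hξdef], key f ξ hξmem]
end

section
/- Let C be a nonempty L-embedded subset of a Banach space E and B a nonempty bounded subset of E. Then the Chebyshev center W_C(B) of B in C is nonempty and weakly compact; if C is convex, then W_C(B) is convex. -/
open NormedSpace Set Topology

/-- The Chebyshev radius of `B` in `C`. -/
noncomputable def chebyshevRadius {E : Type*} [NormedAddCommGroup E] (C B : Set E) : ℝ :=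
  sInf {r : ℝ | 0 ≤ r ∧ ∃ x ∈ C, ∀ b ∈ B, ‖x - b‖ ≤ r}

/-- The Chebyshev center of `B` in `C`. -/
noncomputable def chebyshevCenter {E : Type*} [NormedAddCommGroup E] (C B : Set E) : Set E :=
  {x ∈ C | ∀ b ∈ B, ‖x - b‖ ≤ chebyshevRadius C B}

section Aux

variable {E : Type*} [NormedAddCommGroup E] [NormedSpace ℝ E]

/-- The canonical map from `E` to its bidual equipped with the weak-star topology. -/
noncomputable def ddMap (x : E) : WeakDual ℝ (StrongDual ℝ E) :=
  StrongDual.toWeakDual (inclusionInDoubleDual ℝ E x)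

lemma toNormedDual_ddMap (x : E) :
    WeakDual.toStrongDual (ddMap x) = inclusionInDoubleDual ℝ E x := rfl

lemma ddMap_isInducing :
    IsInducing (fun x : WeakSpace ℝ E => ddMap ((toWeakSpace ℝ E).symm x)) := by
  have hψ : IsInducing (fun (u : WeakDual ℝ (StrongDual ℝ E)) (f : StrongDual ℝ E) => u f) := ⟨rfl⟩
  rw [← hψ.of_comp_iff]
  exact ⟨rfl⟩

/-- The weak-star closed "ball" in the weak dual. -/
noncomputable def ddBall (b : E) (s : ℝ) : Set (WeakDual ℝ (StrongDual ℝ E)) :=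
  WeakDual.toStrongDual ⁻¹' Metric.closedBall (inclusionInDoubleDual ℝ E b) s

lemma isClosed_ddBall (b : E) (s : ℝ) : IsClosed (ddBall b s : Set (WeakDual ℝ (StrongDual ℝ E))) :=
  WeakDual.isClosed_closedBall _ _

lemma isCompact_ddBall [CompleteSpace E] (b : E) (s : ℝ) :
    IsCompact (ddBall b s : Set (WeakDual ℝ (StrongDual ℝ E))) :=
  WeakDual.isCompact_closedBall (inclusionInDoubleDual ℝ E b) s

lemma mem_ddBall {u : WeakDual ℝ (StrongDual ℝ E)} {b : E} {s : ℝ} :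
    u ∈ ddBall b s ↔ ‖WeakDual.toStrongDual u - inclusionInDoubleDual ℝ E b‖ ≤ s := by
  simp [ddBall, Metric.mem_closedBall, dist_eq_norm]
  exact (dist_eq_norm (E := StrongDual ℝ (StrongDual ℝ E)) _ _) ▸ Iff.rfl

lemma ddMap_mem_ddBall {x b : E} {s : ℝ} (h : ‖x - b‖ ≤ s) : ddMap x ∈ ddBall b s := by
  rw [mem_ddBall, toNormedDual_ddMap, ← (inclusionInDoubleDual ℝ E).map_sub]
  have hnorm : ‖inclusionInDoubleDual ℝ E (x - b)‖ = ‖x - b‖ :=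
    (inclusionInDoubleDualLi ℝ (E := E)).norm_map (x - b)
  rw [hnorm]
  exact h

end Aux

/-- For a nonempty L-embedded set `C` and a nonempty bounded set `B`, the Chebyshev center
`W_C(B)` is nonempty and weakly compact; it is convex when `C` is convex. -/
theorem chebyshevCenter_nonempty_weaklyCompact {E : Type*} [NormedAddCommGroup E]
    [NormedSpace ℝ E] [CompleteSpace E] (C B : Set E) (hCne : C.Nonempty)
    (hL : IsLEmbeddedSet C) (hBne : B.Nonempty) (hBbd : Bornology.IsBounded B) :
    (chebyshevCenter C B).Nonempty ∧
      IsCompact (toWeakSpace ℝ E '' chebyshevCenter C B) ∧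
      (Convex ℝ C → Convex ℝ (chebyshevCenter C B)) := by
  classical
  set J := inclusionInDoubleDual ℝ E with hJ
  set S : Set ℝ := {r : ℝ | 0 ≤ r ∧ ∃ x ∈ C, ∀ b ∈ B, ‖x - b‖ ≤ r} with hS
  set r : ℝ := chebyshevRadius C B with hrdef
  have hrS : r = sInf S := rfl
  obtain ⟨c₀, hc₀⟩ := hCne
  obtain ⟨b₀, hb₀⟩ := hBne
  -- `S` is nonempty and bounded below
  have hSne : S.Nonempty := by
    obtain ⟨R, hR⟩ := hBbd.subset_closedBall c₀
    refine ⟨max R 0, le_max_right _ _, c₀, hc₀, fun b hb => ?_⟩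
    have : dist b c₀ ≤ R := hR hb
    rw [dist_comm] at this
    rw [← dist_eq_norm]
    exact this.trans (le_max_left _ _)
  have hSbdd : BddBelow S := ⟨0, fun s hs => hs.1⟩
  have hr0 : 0 ≤ r := by rw [hrS]; exact le_csInf hSne fun s hs => hs.1
  -- recovery lemma: a weak-star limit point of `C` whose distance to every point of `B`
  -- is at most `r` comes from a point of the Chebyshev center.
  have hrec : ∀ u : WeakDual ℝ (StrongDual ℝ E), u ∈ closure (ddMap '' C) →
      (∀ b ∈ B, u ∈ ddBall b r) → ∃ c ∈ chebyshevCenter C B, ddMap c = u := by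
    obtain ⟨Es, hEs1, hEs2⟩ := hL
    intro u hu hub
    have hu' : WeakDual.toStrongDual u ∈ weakStarClosure (J '' C) := by
      show StrongDual.toWeakDual (WeakDual.toStrongDual u) ∈ closure (StrongDual.toWeakDual '' (J '' C))
      rw [image_image]
      exact hu
    obtain ⟨c, hcC, ξ, hξEs, husum, -⟩ := hEs2 _ hu'
    have hkey : ∀ b ∈ B, ‖c - b‖ + ‖ξ‖ ≤ r := by
      intro b hb
      have h1 : WeakDual.toStrongDual u - J b = J (c - b) + ξ := by
        rw [husum, map_sub]; abel
      have h2 : ‖WeakDual.toStrongDual u - J b‖ ≤ r := mem_ddBall.mp (hub b hb)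
      rwa [h1, hEs1 (c - b) ξ hξEs] at h2
    have hcW : c ∈ chebyshevCenter C B := by
      refine ⟨hcC, fun b hb => ?_⟩
      have := hkey b hb
      have := norm_nonneg ξ
      show ‖c - b‖ ≤ r
      linarith
    have hξ0 : ξ = 0 := by
      have hmem : (r - ‖ξ‖) ∈ S := by
        refine ⟨?_, c, hcC, fun b hb => ?_⟩
        · have := hkey b₀ hb₀; have := norm_nonneg (c - b₀); linarith
        · have := hkey b hb; linarith
      have hle : r ≤ r - ‖ξ‖ := by rw [hrS]; exact csInf_le hSbdd hmem
      have hξle : ‖ξ‖ ≤ 0 := by linarith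
      exact (norm_le_zero_iff (a := ξ)).mp hξle
    refine ⟨c, hcW, ?_⟩
    have h3 : WeakDual.toStrongDual u = J c := by rw [husum, hξ0, add_zero]
    show StrongDual.toWeakDual (J c) = u
    rw [← h3]
    rfl
  -- Nonemptiness
  have hne : (chebyshevCenter C B).Nonempty := by
    set A : ℕ → Set E := fun n => {x ∈ C | ∀ b ∈ B, ‖x - b‖ ≤ r + 1 / (n + 1)} with hA
    have hAne : ∀ n, (A n).Nonempty := by
      intro n
      have hpos : (0 : ℝ) < 1 / (n + 1) := by positivity
      have hlt : sInf S < r + 1 / (n + 1) := by rw [← hrS]; linarith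
      obtain ⟨s, hsS, hs⟩ := (csInf_lt_iff hSbdd hSne).mp hlt
      obtain ⟨-, x, hxC, hx⟩ := hsS
      exact ⟨x, hxC, fun b hb => (hx b hb).trans hs.le⟩
    set T : ℕ → Set (WeakDual ℝ (StrongDual ℝ E)) := fun n => closure (ddMap '' A n) with hT
    have hAsubC : ∀ n, A n ⊆ C := fun n x hx => hx.1
    have hTball : ∀ n b, b ∈ B → T n ⊆ ddBall b (r + 1 / (n + 1)) := by
      intro n b hb
      refine closure_minimal ?_ (isClosed_ddBall _ _)
      rintro _ ⟨x, hx, rfl⟩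
      exact ddMap_mem_ddBall (hx.2 b hb)
    have hTsub : ∀ n, T (n + 1) ⊆ T n := by
      intro n
      refine closure_mono (image_mono fun x hx => ⟨hx.1, fun b hb => (hx.2 b hb).trans ?_⟩)
      have : (1 : ℝ) / (n + 1 + 1) ≤ 1 / (n + 1) := by
        apply one_div_le_one_div_of_le
        · positivity
        · linarith
      simp only [Nat.cast_add, Nat.cast_one]
      linarith
    have hT0cpt : IsCompact (T 0) := by
      exact (isCompact_ddBall b₀ _).of_isClosed_subset isClosed_closure (hTball 0 b₀ hb₀)
    have hTclosed : ∀ n, IsClosed (T n) := fun n => isClosed_closure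
    have hTne : ∀ n, (T n).Nonempty := fun n => ((hAne n).image ddMap).closure
    obtain ⟨u, hu⟩ := IsCompact.nonempty_iInter_of_sequence_nonempty_isCompact_isClosed
      T hTsub hTne hT0cpt hTclosed
    rw [mem_iInter] at hu
    have hu1 : u ∈ closure (ddMap '' C) :=
      closure_mono (image_mono (hAsubC 0)) (hu 0)
    have hu2 : ∀ b ∈ B, u ∈ ddBall b r := by
      intro b hb
      rw [mem_ddBall]
      refine le_of_forall_pos_le_add fun ε hε => ?_
      obtain ⟨n, hn⟩ := exists_nat_one_div_lt hε
      have := mem_ddBall.mp (hTball n b hb (hu n))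
      push_cast at this hn ⊢
      linarith
    obtain ⟨c, hc, -⟩ := hrec u hu1 hu2
    exact ⟨c, hc⟩
  refine ⟨hne, ?_, ?_⟩
  · -- weak compactness
    set W := chebyshevCenter C B with hW
    have hWC : W ⊆ C := fun x hx => hx.1
    have hWball : ddMap '' W ⊆ ddBall b₀ r := by
      rintro _ ⟨x, hx, rfl⟩
      exact ddMap_mem_ddBall (hx.2 b₀ hb₀)
    have hclosed : IsClosed (ddMap '' W : Set (WeakDual ℝ (StrongDual ℝ E))) := by
      refine isClosed_of_closure_subset fun u hu => ?_
      have hu1 : u ∈ closure (ddMap '' C) := closure_mono (image_mono hWC) hu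
      have hu2 : ∀ b ∈ B, u ∈ ddBall b r := by
        intro b hb
        refine closure_minimal ?_ (isClosed_ddBall b r) hu
        rintro _ ⟨x, hx, rfl⟩
        exact ddMap_mem_ddBall (hx.2 b hb)
      obtain ⟨c, hc, hcu⟩ := hrec u hu1 hu2
      exact ⟨c, hc, hcu⟩
    have hcpt : IsCompact (ddMap '' W : Set (WeakDual ℝ (StrongDual ℝ E))) :=
      (isCompact_ddBall b₀ r).of_isClosed_subset hclosed hWball
    rw [ddMap_isInducing.isCompact_iff]
    have himg : (fun x : WeakSpace ℝ E => ddMap ((toWeakSpace ℝ E).symm x)) ''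
        (toWeakSpace ℝ E '' W) = ddMap '' W := by
      rw [image_image]
      exact image_congr fun x _ => by rw [LinearEquiv.symm_apply_apply]
    rw [himg]
    exact hcpt
  · -- convexity
    intro hC
    have heq : chebyshevCenter C B = C ∩ ⋂ b ∈ B, Metric.closedBall b r := by
      ext x
      simp [chebyshevCenter, Metric.mem_closedBall, dist_eq_norm, ← hrdef]
    rw [heq]
    exact hC.inter (convex_iInter₂ fun b _ => convex_closedBall b r)
end

section
/- Let S be a semigroup acting on a subset C of a Banach space by nonexpansive maps T_s, and let B ⊆ C be a nonempty bounded set with B ⊆ T_s(B) for all s ∈ S. Then the Chebyshev center W_C(B) of B in C is invariant under every T_s. -/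
open Set

/-- If a semigroup `S` acts on `C ⊆ E` by nonexpansive maps and `B ⊆ C` is a nonempty
bounded set with `B ⊆ T_s(B)` for all `s`, then the Chebyshev center `W_C(B)` is invariant
under every `T_s`. -/
theorem chebyshevCenter_invariant {E S : Type*} [NormedAddCommGroup E] [Semigroup S]
    (C B : Set E) (T : S → E → E)
    (hmaps : ∀ s, MapsTo (T s) C C)
    (hrep : ∀ s t : S, ∀ x ∈ C, T (s * t) x = T s (T t x))
    (hnonexp : ∀ s : S, ∀ x ∈ C, ∀ y ∈ C, ‖T s x - T s y‖ ≤ ‖x - y‖)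
    (hBC : B ⊆ C) (hBne : B.Nonempty) (hBbd : Bornology.IsBounded B)
    (hBsub : ∀ s : S, B ⊆ T s '' B) :
    ∀ s : S, MapsTo (T s) (chebyshevCenter C B) (chebyshevCenter C B) := by
  intro s x hx
  obtain ⟨hxC, hxB⟩ := hx
  refine ⟨hmaps s hxC, ?_⟩
  intro b hb
  obtain ⟨b', hb', rfl⟩ := hBsub s hb
  exact le_trans (hnonexp s x hxC b' (hBC hb')) (hxB b' hb')
end

section
/- Every left reversible discrete semigroup S can be exhausted by countable left reversible subsemigroups: for every finite subset α of S there exists a countable left reversible subsemigroup S_α of S containing α. -/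
open Set

/-- Every left reversible discrete semigroup is exhausted by countable left reversible
subsemigroups: every finite subset is contained in a countable left reversible
subsemigroup. -/
theorem exists_countable_leftReversible_subsemigroup {S : Type*} [Semigroup S]
    (hrev : ∀ s t : S, ∃ u v : S, s * u = t * v) (α : Finset S) :
    ∃ T : Set S, T.Countable ∧ (∀ a ∈ T, ∀ b ∈ T, a * b ∈ T) ∧
      (∀ a ∈ T, ∀ b ∈ T, ∃ u ∈ T, ∃ v ∈ T, a * u = b * v) ∧ (α : Set S) ⊆ T := by
  choose u v huv using hrev
  set F : Set S → Set S := fun A =>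
    A ∪ (fun p : S × S => p.1 * p.2) '' (A ×ˢ A)
      ∪ (fun p : S × S => u p.1 p.2) '' (A ×ˢ A)
      ∪ (fun p : S × S => v p.1 p.2) '' (A ×ˢ A) with hF
  set U : ℕ → Set S := fun n => Nat.rec (α : Set S) (fun _ A => F A) n with hU
  have hUsucc : ∀ n, U (n + 1) = F (U n) := fun n => rfl
  have hsub : ∀ A : Set S, A ⊆ F A := fun A => by
    intro x hx; exact Or.inl (Or.inl (Or.inl hx))
  have hmono : Monotone U := by
    apply monotone_nat_of_le_succ
    intro n; rw [hUsucc]; exact hsub _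
  have hcount : ∀ n, (U n).Countable := by
    intro n
    induction n with
    | zero => exact α.countable_toSet
    | succ n ih =>
      rw [hUsucc, hF]
      exact (((ih.union ((ih.prod ih).image _)).union ((ih.prod ih).image _)).union
        ((ih.prod ih).image _))
  refine ⟨⋃ n, U n, countable_iUnion hcount, ?_, ?_, ?_⟩
  · intro a ha b hb
    obtain ⟨n, hn⟩ := mem_iUnion.1 ha
    obtain ⟨m, hm⟩ := mem_iUnion.1 hb
    refine mem_iUnion.2 ⟨max n m + 1, ?_⟩
    rw [hUsucc]
    have ha' : a ∈ U (max n m) := hmono (le_max_left n m) hn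
    have hb' : b ∈ U (max n m) := hmono (le_max_right n m) hm
    exact Or.inl (Or.inl (Or.inr ⟨(a, b), ⟨ha', hb'⟩, rfl⟩))
  · intro a ha b hb
    obtain ⟨n, hn⟩ := mem_iUnion.1 ha
    obtain ⟨m, hm⟩ := mem_iUnion.1 hb
    have ha' : a ∈ U (max n m) := hmono (le_max_left n m) hn
    have hb' : b ∈ U (max n m) := hmono (le_max_right n m) hm
    refine ⟨u a b, mem_iUnion.2 ⟨max n m + 1, ?_⟩, v a b,
      mem_iUnion.2 ⟨max n m + 1, ?_⟩, huv a b⟩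
    · rw [hUsucc]; exact Or.inl (Or.inr ⟨(a, b), ⟨ha', hb'⟩, rfl⟩)
    · rw [hUsucc]; exact Or.inr ⟨(a, b), ⟨ha', hb'⟩, rfl⟩
  · intro x hx
    exact mem_iUnion.2 ⟨0, hx⟩
end

section
/- In a discrete semigroup S, define a ~ b if there exists x ∈ S with ax = bx. If S is left reversible, then ~ is an equivalence relation on S which is compatible with multiplication (a ~ b and c ~ d imply ac ~ bd), so the quotient S/~ is a right cancellative semigroup. -/
/-- In a left reversible discrete semigroup, the relation `a ~ b ↔ ∃ x, a*x = b*x` is a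
multiplicative congruence whose quotient is right cancellative. -/
theorem leftReversible_congruence {S : Type*} [Semigroup S]
    (hrev : ∀ s t : S, ∃ u v : S, s * u = t * v) :
    Equivalence (fun a b : S => ∃ x : S, a * x = b * x) ∧
      (∀ a b c d : S, (∃ x, a * x = b * x) → (∃ x, c * x = d * x) →
        ∃ x, (a * c) * x = (b * d) * x) ∧
      (∀ a b c : S, (∃ x, (a * c) * x = (b * c) * x) → ∃ x, a * x = b * x) := by
  have htrans : ∀ a b c : S, (∃ x, a * x = b * x) → (∃ x, b * x = c * x) →
      ∃ x, a * x = c * x := by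
    rintro a b c ⟨x, hx⟩ ⟨y, hy⟩
    obtain ⟨u, v, huv⟩ := hrev x y
    refine ⟨x * u, ?_⟩
    calc a * (x * u) = a * x * u := (mul_assoc ..).symm
      _ = b * x * u := by rw [hx]
      _ = b * (x * u) := mul_assoc ..
      _ = b * (y * v) := by rw [huv]
      _ = b * y * v := (mul_assoc ..).symm
      _ = c * y * v := by rw [hy]
      _ = c * (y * v) := mul_assoc ..
      _ = c * (x * u) := by rw [huv]
  refine ⟨⟨fun a => ⟨a, rfl⟩, fun ⟨x, hx⟩ => ⟨x, hx.symm⟩, htrans _ _ _⟩, ?_, ?_⟩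
  · rintro a b c d ⟨x, hx⟩ ⟨y, hy⟩
    refine htrans _ (a * d) _ ⟨y, by rw [mul_assoc, mul_assoc, hy]⟩ ?_
    obtain ⟨u, v, huv⟩ := hrev x d
    refine ⟨v, ?_⟩
    calc a * d * v = a * (d * v) := mul_assoc ..
      _ = a * (x * u) := by rw [← huv]
      _ = a * x * u := (mul_assoc ..).symm
      _ = b * x * u := by rw [hx]
      _ = b * (x * u) := mul_assoc ..
      _ = b * (d * v) := by rw [huv]
      _ = b * d * v := (mul_assoc ..).symm
  · rintro a b c ⟨x, hx⟩
    exact ⟨c * x, by rw [← mul_assoc, ← mul_assoc, hx]⟩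
end
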